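/- (Uniqueness of envelope extension, strong version.) Let ω be a nonempty factor of the doubling sequence D∞ with Env(ω) = E_{m,i}, and let μ₁, μ₂ be the unique words with E_{m,i} = μ₁·ω·μ₂. Then for every p ≥ 1 the p-th occurrence of ω in D∞ lies inside the p-th occurrence of E_{m,i}: L(ω,p) = L(E_{m,i},p) + |μ₁|. Equivalently, the set of starting positions of occurrences of ω in D∞ is exactly { L(E_{m,i},p) + |μ₁| : p ≥ 1 }. -/

import Mathlib

namespace PD

/-- The period-doubling substitution on the alphabet `Bool`,
where `false` stands for the letter `a` and `true` for the letter `b`: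
`σ(a) = ab`, `σ(b) = aa`. -/
def sub : Bool → List Bool
  | false => [false, true]
  | true  => [false, false]

/-- The substitution applied to a finite word. -/
def subW (w : List Bool) : List Bool := w.flatMap sub

/-- `A m = σ^m(a)`. -/
def A (m : ℕ) : List Bool := subW^[m] [false]

/-- `B m = σ^m(b)`. -/
def B (m : ℕ) : List Bool := subW^[m] [true]

/-- The doubling sequence `D∞` (0-indexed: `D n` is the `(n+1)`-th letter),
the fixed point of `σ` beginning with `a`; `A m` is a prefix of `A (m+1)`,
and `A (n+1)` has length `2^(n+1) > n`. -/
def D (n : ℕ) : Bool := (A (n + 1)).getD n false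

/-- `δ m`, the last letter of `A m`. -/
def delta (m : ℕ) : Bool := (A m).getLastD false

/-- The envelope words (`i ∈ {1,2}`): `E m 1 = A m` minus its last letter,
`E m 2 = A (m-1) ++ (A m` minus its last letter `)`. -/
def E (m i : ℕ) : List Bool :=
  if i = 1 then (A m).dropLast else A (m - 1) ++ (A m).dropLast

/-- `w` occurs at the (1-indexed) position `j` in the finite word `τ`. -/
def OccursIn (w τ : List Bool) (j : ℕ) : Prop :=
  1 ≤ j ∧ (τ.drop (j - 1)).take w.length = w

/-- `w` occurs at the (1-indexed) position `j` in the doubling sequence. -/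
def OccursD (w : List Bool) (j : ℕ) : Prop :=
  1 ≤ j ∧ ∀ k < w.length, D (j - 1 + k) = w.getD k false

/-- `w` is a factor of the doubling sequence. -/
def FactorD (w : List Bool) : Prop := ∃ j, OccursD w j

/-- `L w p`: the (1-indexed) starting position of the `p`-th occurrence of `w`
in the doubling sequence, occurrences being ordered by starting position.
(Each factor occurs infinitely often, so `Nat.nth` enumerates all occurrences
in increasing order.) -/
noncomputable def L (w : List Bool) (p : ℕ) : ℕ := Nat.nth (OccursD w) (p - 1)

/-- The strict total order on envelope words:
`E m₁ i₁ ⊏ E m₂ i₂` iff `m₁ < m₂`, or `m₁ = m₂` and `i₁ < i₂`. -/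
def EnvLt (m₁ i₁ m₂ i₂ : ℕ) : Prop := m₁ < m₂ ∨ (m₁ = m₂ ∧ i₁ < i₂)

/-- `Env(w) = E m i`: the envelope word `E m i` is the `⊏`-minimal envelope
word containing `w` as a factor. -/
def IsEnv (w : List Bool) (m i : ℕ) : Prop :=
  1 ≤ m ∧ (i = 1 ∨ i = 2) ∧ w <:+: E m i ∧
    ∀ m' i', 1 ≤ m' → (i' = 1 ∨ i' = 2) → EnvLt m' i' m i → ¬ w <:+: E m' i'

/-- The substitution `φ₁(a) = a`, `φ₁(b) = bb`. -/
def phi1 : Bool → List Bool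
  | false => [false]
  | true  => [true, true]

/-- `Θ₁ = φ₁(D∞)` (0-indexed): `φ₁(A (n+1))` is a prefix of `Θ₁` of length `> n`. -/
def Theta1 (n : ℕ) : Bool := ((A (n + 1)).flatMap phi1).getD n false

/-- The substitution `φ₂(a) = ab`, `φ₂(b) = acac`, over the alphabet `Fin 3`
where `0` stands for `a`, `1` for `b` and `2` for `c`. -/
def phi2 : Bool → List (Fin 3)
  | false => [0, 1]
  | true  => [0, 2, 0, 2]

/-- `Θ₂ = φ₂(D∞)` (0-indexed). -/
def Theta2 (n : ℕ) : Fin 3 := ((A (n + 1)).flatMap phi2).getD n 0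

/-- `N₁(x,p)`: the number of letters `x` among the first `p` letters of `Θ₁`. -/
def N1 (x : Bool) (p : ℕ) : ℕ := ((List.range p).map Theta1).count x

/-- `N₂(x,p)`: the number of letters `x` among the first `p` letters of `Θ₂`. -/
def N2 (x : Fin 3) (p : ℕ) : ℕ := ((List.range p).map Theta2).count x

end PD

namespace PD

-- ### basic subW lemmas

lemma sub_eq (c : Bool) : sub c = [false, !c] := by cases c <;> rfl

lemma subW_nil : subW [] = [] := rfl

lemma subW_cons (c : Bool) (l : List Bool) :
    subW (c :: l) = false :: (!c) :: subW l := by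
  show sub c ++ subW l = _
  rw [sub_eq]; rfl

lemma subW_append (x y : List Bool) : subW (x ++ y) = subW x ++ subW y := by
  simp [subW]

lemma length_subW (l : List Bool) : (subW l).length = 2 * l.length := by
  induction l with
  | nil => rfl
  | cons c l ih => rw [subW_cons]; simp [ih]; ring

lemma subW_getD_even (l : List Bool) (t : ℕ) :
    (subW l).getD (2 * t) false = false := by
  induction l generalizing t with
  | nil => rfl
  | cons c l ih =>
    rw [subW_cons]
    cases t with
    | zero => rfl
    | succ t =>
      have h : 2 * (t + 1) = (2 * t) + 1 + 1 := by ring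
      rw [h]
      simpa using ih t

lemma subW_getD_odd (l : List Bool) (t : ℕ) (ht : t < l.length) :
    (subW l).getD (2 * t + 1) false = !(l.getD t false) := by
  induction l generalizing t with
  | nil => simp at ht
  | cons c l ih =>
    rw [subW_cons]
    cases t with
    | zero => rfl
    | succ t =>
      have h : 2 * (t + 1) + 1 = (2 * t + 1) + 1 + 1 := by ring
      rw [h]
      simpa using ih t (by simpa using ht)

lemma take_subW (l : List Bool) (t : ℕ) :
    (subW l).take (2 * t) = subW (l.take t) := by
  induction l generalizing t with
  | nil => simp [subW_nil]
  | cons c l ih =>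
    cases t with
    | zero => simp [subW_nil]
    | succ t =>
      rw [subW_cons, List.take_succ_cons, subW_cons]
      have h : 2 * (t + 1) = (2 * t) + 1 + 1 := by ring
      rw [h, List.take_succ_cons, List.take_succ_cons, ih]

lemma subW_prefix {x y : List Bool} (h : x <+: y) : subW x <+: subW y := by
  obtain ⟨t, rfl⟩ := h
  rw [subW_append]
  exact List.prefix_append _ _

-- ### A lemmas

lemma A_zero : A 0 = [false] := rfl

lemma A_succ (m : ℕ) : A (m + 1) = subW (A m) :=
  Function.iterate_succ_apply' _ _ _

lemma length_A (m : ℕ) : (A m).length = 2 ^ m := by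
  induction m with
  | zero => rfl
  | succ m ih => rw [A_succ, length_subW, ih]; ring

lemma A_ne_nil (m : ℕ) : A m ≠ [] := by
  intro h
  have h2 := length_A m
  rw [h] at h2
  simp at h2
  have : (0:ℕ) < 2 ^ m := by positivity
  omega

lemma A_prefix (m : ℕ) : A m <+: A (m + 1) := by
  induction m with
  | zero => exact ⟨[true], rfl⟩
  | succ m ih => rw [A_succ, A_succ]; exact subW_prefix ih

lemma A_prefix_le {m m' : ℕ} (h : m ≤ m') : A m <+: A m' := by
  induction m' with
  | zero => rw [Nat.le_zero.mp h]
  | succ m' ih =>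
    rcases Nat.lt_or_ge m (m' + 1) with h' | h'
    · exact (ih (Nat.lt_succ_iff.mp h')).trans (A_prefix m')
    · rw [Nat.le_antisymm h h']

lemma getD_prefix {x y : List Bool} (h : x <+: y) {k : ℕ} (hk : k < x.length) :
    y.getD k false = x.getD k false := by
  obtain ⟨t, rfl⟩ := h
  exact List.getD_append _ _ _ _ hk

-- ### D basics

lemma D_eq_A {k n : ℕ} (h : n < 2 ^ k) : D n = (A k).getD n false := by
  unfold D
  rcases Nat.le_total (n + 1) k with hle | hle
  · exact (getD_prefix (A_prefix_le hle) (by rw [length_A]; exact lt_of_lt_of_le (Nat.lt_two_pow_self (n := n)) (Nat.pow_le_pow_right (by norm_num) (Nat.le_succ n)))).symm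
  · exact getD_prefix (A_prefix_le hle) (by rw [length_A]; exact h)

lemma D_even (t : ℕ) : D (2 * t) = false := by
  have h : 2 * t < 2 ^ (t + 1) := by
    have := Nat.lt_two_pow_self (n := t)
    rw [pow_succ]; omega
  rw [D_eq_A h, A_succ]
  exact subW_getD_even _ _

lemma D_odd (t : ℕ) : D (2 * t + 1) = !(D t) := by
  have ht : t < 2 ^ t := Nat.lt_two_pow_self (n := t)
  have h : 2 * t + 1 < 2 ^ (t + 1) := by rw [pow_succ]; omega
  rw [D_eq_A h, A_succ, subW_getD_odd _ _ (by rw [length_A]; exact ht)]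
  congr 1
  exact (D_eq_A ht).symm

lemma D_true_odd {x : ℕ} (h : D x = true) : x % 2 = 1 := by
  rcases Nat.even_or_odd x with ⟨t, rfl⟩ | hodd
  · rw [show t + t = 2 * t by ring, D_even] at h; exact absurd h (by simp)
  · obtain ⟨t, rfl⟩ := hodd; omega

lemma D_not_adjacent (t : ℕ) : ¬(D t = true ∧ D (t + 1) = true) := by
  rintro ⟨h1, h2⟩
  have o1 := D_true_odd h1
  have o2 := D_true_odd h2
  omega

end PD

namespace PD

/-- `w` occurs at the 0-indexed position `j` in `D`. -/
def occ (w : List Bool) (j : ℕ) : Prop := ∀ k < w.length, D (j + k) = w.getD k false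

lemma occ_subW {v : List Bool} {j : ℕ} (h : occ v j) : occ (subW v) (2 * j) := by
  intro k hk
  rw [length_subW] at hk
  rcases Nat.even_or_odd k with ⟨t, rfl⟩ | ⟨t, rfl⟩
  · rw [show 2 * j + (t + t) = 2 * (j + t) by ring, D_even,
      show t + t = 2 * t by ring, subW_getD_even]
  · rw [show 2 * j + (2 * t + 1) = 2 * (j + t) + 1 by ring, D_odd,
      subW_getD_odd _ _ (by omega), h t (by omega)]

lemma occ_decode {v w : List Bool} {j : ℕ}
    (hlen : 2 * v.length ≤ w.length)
    (hlet : ∀ t < v.length, w.getD (2 * t + 1) false = !(v.getD t false))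
    (h : occ w (2 * j)) : occ v j := by
  intro t ht
  have h1 := h (2 * t + 1) (by omega)
  rw [show 2 * j + (2 * t + 1) = 2 * (j + t) + 1 by ring, D_odd, hlet t ht] at h1
  simpa using h1

lemma occ_prefix {w w' : List Bool} {j : ℕ} (hp : w <+: w') (h : occ w' j) : occ w j := by
  intro k hk
  rw [← getD_prefix hp hk]
  exact h k (lt_of_lt_of_le hk hp.length_le)

lemma occ_concat {x : List Bool} {c : Bool} {j : ℕ} (h : occ x j)
    (hc : D (j + x.length) = c) : occ (x ++ [c]) j := by
  intro k hk
  simp only [List.length_append, List.length_singleton] at hk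
  rcases Nat.lt_or_ge k x.length with h' | h'
  · rw [List.getD_append _ _ _ _ h']; exact h k h'
  · have hke : k = x.length := by omega
    subst hke
    rw [List.getD_append_right _ _ _ _ le_rfl]
    simpa using hc

lemma getD_split {x y z : List Bool} {k : ℕ} (hk : k < y.length) :
    (x ++ y ++ z).getD (x.length + k) false = y.getD k false := by
  rw [List.append_assoc, List.getD_append_right _ _ _ _ (by omega),
    Nat.add_sub_cancel_left, List.getD_append _ _ _ _ hk]

lemma occ_infix {x y z : List Bool} {j : ℕ} (h : occ (x ++ y ++ z) j) :
    occ y (j + x.length) := by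
  intro k hk
  have h1 := h (x.length + k) (by simp [List.length_append]; omega)
  rw [getD_split hk] at h1
  rw [← h1]
  ring_nf

-- ### E lemmas

lemma A_one : A 1 = [false, true] := by rw [A_succ, A_zero]; rfl

lemma E_one_one : E 1 1 = [false] := by simp [E, A_one]

lemma E_one_two : E 1 2 = [false, false] := by simp [E, A_one, A_zero]

lemma subW_singleton (c : Bool) : subW [c] = [false] ++ [!c] := by cases c <;> rfl

lemma dropLast_subW (l : List Bool) (h : l ≠ []) :
    (subW l).dropLast = subW l.dropLast ++ [false] := by
  conv_lhs => rw [← List.dropLast_append_getLast h]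
  rw [subW_append, subW_singleton, ← List.append_assoc, List.dropLast_concat]

lemma E_succ (m i : ℕ) (hm : 1 ≤ m) : E (m + 1) i = subW (E m i) ++ [false] := by
  by_cases hi : i = 1
  · subst hi
    unfold E
    rw [if_pos rfl, if_pos rfl, A_succ m, dropLast_subW _ (A_ne_nil m)]
  · unfold E
    rw [if_neg hi, if_neg hi, Nat.add_sub_cancel,
      subW_append, List.append_assoc, ← dropLast_subW _ (A_ne_nil m), ← A_succ,
      show m - 1 + 1 = m from Nat.sub_add_cancel hm, A_succ m]

lemma length_E_succ (m i : ℕ) (hm : 1 ≤ m) :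
    (E (m + 1) i).length = 2 * (E m i).length + 1 := by
  rw [E_succ _ _ hm]
  simp [length_subW]

-- ### goodness: letters at even positions are `a`

def Good (l : List Bool) : Prop := ∀ t, l.getD (2 * t) false = false

lemma good_subW_concat (l : List Bool) : Good (subW l ++ [false]) := by
  intro t
  rcases Nat.lt_or_ge (2 * t) (subW l).length with h | h
  · rw [List.getD_append _ _ _ _ h, subW_getD_even]
  · rcases Nat.eq_or_lt_of_le h with h' | h'
    · rw [List.getD_append_right _ _ _ _ h, ← h', Nat.sub_self]; rfl
    · rw [List.getD_eq_default]
      simp only [List.length_append, List.length_singleton]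
      omega

lemma good_E (m i : ℕ) (hm : 1 ≤ m) : Good (E m i) := by
  induction m with
  | zero => omega
  | succ m ih =>
    rcases Nat.eq_or_lt_of_le hm with h1 | h1
    · -- m + 1 = 1
      have hm0 : m = 0 := by omega
      subst hm0
      by_cases hi : i = 1
      · subst hi; rw [E_one_one]
        intro t
        cases t with
        | zero => rfl
        | succ t =>
          rw [List.getD_eq_default _ _ (by simp only [List.length_singleton]; omega)]
      · rw [show E 1 i = A 0 ++ (A 1).dropLast from by simp [E, hi], A_zero, A_one]
        intro t
        cases t with
        | zero => rfl
        | succ t =>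
          rw [List.getD_eq_default _ _ (by
            simp only [List.length_append, List.length_cons, List.length_nil,
              List.dropLast_cons₂, List.dropLast_singleton]; omega)]
    · have hm1 : 1 ≤ m := by omega
      rw [E_succ _ _ hm1]
      exact good_subW_concat _
    
lemma good_true_odd {l : List Bool} (hg : Good l) {x : ℕ}
    (h : l.getD x false = true) : x % 2 = 1 := by
  rcases Nat.even_or_odd x with ⟨t, rfl⟩ | hodd
  · rw [show t + t = 2 * t by ring, hg t] at h; exact absurd h (by simp)
  · obtain ⟨t, rfl⟩ := hodd; omega

-- ### occurrences of E words exist beyond any bound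

lemma occ_E_exists (m i : ℕ) (hm : 1 ≤ m) : ∀ N, ∃ e, N ≤ e ∧ occ (E m i) e := by
  induction m with
  | zero => omega
  | succ m ih =>
    intro N
    rcases Nat.eq_or_lt_of_le hm with h1 | h1
    · have hm0 : m = 0 := by omega
      subst hm0
      by_cases hi : i = 1
      · subst hi
        refine ⟨2 * N, by omega, ?_⟩
        rw [E_one_one]
        intro k hk
        have hk0 : k = 0 := by simp at hk; omega
        subst hk0
        rw [Nat.add_zero, D_even]; rfl
      · refine ⟨2 * (4 * N + 1), by omega, ?_⟩
        rw [show E 1 i = A 0 ++ (A 1).dropLast from by simp [E, hi], A_zero, A_one]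
        intro k hk
        simp only [List.length_append] at hk
        have hD : D (4 * N + 1) = true := by
          rw [show 4 * N + 1 = 2 * (2 * N) + 1 by ring, D_odd, D_even]; rfl
        have hk01 : k = 0 ∨ k = 1 := by simp at hk; omega
        rcases hk01 with rfl | rfl
        · rw [Nat.add_zero, D_even]; rfl
        · rw [D_odd, hD]; rfl
    · have hm1 : 1 ≤ m := by omega
      obtain ⟨e, he, hocc⟩ := ih hm1 N
      refine ⟨2 * e, by omega, ?_⟩
      rw [E_succ _ _ hm1]
      exact occ_concat (occ_subW hocc)
        (by rw [length_subW, show 2 * e + 2 * (E m i).length = 2 * (e + (E m i).length) by ring, D_even])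

end PD

namespace PD

lemma getD_take' (x : List Bool) {n k : ℕ} (h : k < n) :
    (x.take n).getD k false = x.getD k false := by
  rw [List.getD_eq_getElem?_getD, List.getElem?_take, if_pos h, ← List.getD_eq_getElem?_getD]

lemma A_two : A 2 = [false, true, false, false] := by rw [A_succ, A_one]; rfl

lemma A_three : A 3 = [false, true, false, false, false, true, false, true] := by
  rw [A_succ, A_two]; rfl

lemma E_two_one : E 2 1 = [false, true, false] := by simp [E, A_two]

lemma E_two_two : E 2 2 = [false, true, false, true, false] := by simp [E, A_one, A_two]

lemma E_three_one : E 3 1 = [false, true, false, false, false, true, false] := by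
  simp [E, A_three]

lemma infix_subW_concat {u z : List Bool} (h : u <:+: z) :
    (subW u ++ [false]) <:+: (subW z ++ [false]) := by
  obtain ⟨s, t, hh⟩ := h
  subst hh
  cases t with
  | nil => exact ⟨subW s, [], by simp [subW_append]⟩
  | cons c t =>
    exact ⟨subW s, (!c) :: (subW t ++ [false]), by simp [subW_append, subW_cons]⟩

/-- Occurrences of `aaa` always extend to occurrences of `E 3 1` two letters earlier. -/
lemma occ_aaa {j : ℕ} (h : occ [false, false, false] j) :
    2 ≤ j ∧ occ (E 3 1) (j - 2) := by
  have h0 := h 0 (by norm_num)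
  have h1 := h 1 (by norm_num)
  have h2 := h 2 (by norm_num)
  simp only [List.getD_cons_zero, List.getD_cons_succ] at h0 h1 h2
  rcases Nat.even_or_odd j with ⟨s, rfl⟩ | ⟨s, rfl⟩
  · -- even case, j = s + s
    rw [show s + s + 1 = 2 * s + 1 by ring, D_odd] at h1
    have hs : D s = true := by simpa using h1
    obtain ⟨u, rfl⟩ : ∃ u, s = 2 * u + 1 := ⟨s / 2, by have := D_true_odd hs; omega⟩
    refine ⟨by omega, ?_⟩
    rw [E_three_one]
    intro k hk
    simp only [List.length_cons, List.length_nil] at hk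
    have hj2 : (2 * u + 1) + (2 * u + 1) - 2 = 4 * u := by omega
    rw [hj2]
    interval_cases k
    · rw [show 4 * u + 0 = 2 * (2 * u) by ring, D_even]; rfl
    · rw [show 4 * u + 1 = 2 * (2 * u) + 1 by ring, D_odd, D_even]; rfl
    · rw [show 4 * u + 2 = 2 * (2 * u + 1) by ring, D_even]; rfl
    · rw [show 4 * u + 3 = 2 * (2 * u + 1) + 1 by ring, D_odd, hs]; rfl
    · rw [show 4 * u + 4 = 2 * (2 * u + 2) by ring, D_even]; rfl
    · rw [show 4 * u + 5 = 2 * (2 * u + 2) + 1 by ring, D_odd,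
        show 2 * u + 2 = 2 * (u + 1) by ring, D_even]; rfl
    · rw [show 4 * u + 6 = 2 * (2 * u + 3) by ring, D_even]; rfl
  · -- odd case impossible
    exfalso
    rw [show 2 * s + 1 + 0 = 2 * s + 1 by ring, D_odd] at h0
    rw [show 2 * s + 1 + 2 = 2 * (s + 1) + 1 by ring, D_odd] at h2
    exact D_not_adjacent s ⟨by simpa using h0, by simpa using h2⟩

/-- No four consecutive `a`s. -/
lemma no_aaaa (j : ℕ) : ¬ occ [false, false, false, false] j := by
  intro h
  have h0 := h 0 (by norm_num)
  have h1 := h 1 (by norm_num)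
  have h2 := h 2 (by norm_num)
  have h3 := h 3 (by norm_num)
  simp only [List.getD_cons_zero, List.getD_cons_succ] at h0 h1 h2 h3
  rcases Nat.even_or_odd j with ⟨s, rfl⟩ | ⟨s, rfl⟩
  · rw [show s + s + 1 = 2 * s + 1 by ring, D_odd] at h1
    rw [show s + s + 3 = 2 * (s + 1) + 1 by ring, D_odd] at h3
    exact D_not_adjacent s ⟨by simpa using h1, by simpa using h3⟩
  · rw [show 2 * s + 1 + 0 = 2 * s + 1 by ring, D_odd] at h0
    rw [show 2 * s + 1 + 2 = 2 * (s + 1) + 1 by ring, D_odd] at h2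
    exact D_not_adjacent s ⟨by simpa using h0, by simpa using h2⟩

end PD

namespace PD

/-- The inductive statement. -/
def Pp (m : ℕ) : Prop :=
  ∀ i w μ₁ μ₂, w ≠ [] → (∃ j, occ w j) → IsEnv w m i →
    E m i = μ₁ ++ w ++ μ₂ → ∀ j, occ w j → μ₁.length ≤ j ∧ occ (E m i) (j - μ₁.length)

lemma caseA (k : ℕ) (IH : Pp (k + 1)) (i : ℕ) (w μ₁ μ₂ : List Bool)
    (hfac : ∃ j, occ w j)
    (henv : IsEnv w (k + 2) i) (hsplit : E (k + 2) i = μ₁ ++ w ++ μ₂)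
    (heven : μ₁.length % 2 = 0)
    (hb : ∃ t, t < w.length ∧ w.getD t false = true) :
    ∀ j, occ w j → μ₁.length ≤ j ∧ occ (E (k + 2) i) (j - μ₁.length) := by
  obtain ⟨k₀, hk₀lt, hk₀⟩ := hb
  obtain ⟨hm1, hi, hinf, hmin⟩ := henv
  have hrec : E (k + 2) i = subW (E (k + 1) i) ++ [false] := E_succ (k + 1) i (by omega)
  have hlenE : (E (k + 2) i).length = 2 * (E (k + 1) i).length + 1 :=
    length_E_succ _ _ (by omega)
  have hlsplit : μ₁.length + w.length + μ₂.length = 2 * (E (k + 1) i).length + 1 := by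
    have := congrArg List.length hsplit
    rw [hlenE] at this
    simp only [List.length_append] at this
    omega
  -- parity of k₀
  have hgood : Good (E (k + 2) i) := good_E _ _ (by omega)
  have hEk₀ : (E (k + 2) i).getD (μ₁.length + k₀) false = true := by
    rw [hsplit, getD_split hk₀lt]; exact hk₀
  have hk₀odd : k₀ % 2 = 1 := by
    have := good_true_odd hgood hEk₀
    omega
  -- decompose μ₁
  obtain ⟨q, hq2⟩ : ∃ q, μ₁.length = 2 * q := ⟨μ₁.length / 2, by omega⟩
  have hqle : q ≤ (E (k + 1) i).length := by omega
  have hE'split : E (k + 1) i = (E (k + 1) i).take q ++ (E (k + 1) i).drop q :=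
    (List.take_append_drop q _).symm
  have hμ₁eq : μ₁ = subW ((E (k + 1) i).take q) := by
    have h1 : μ₁ = (E (k + 2) i).take μ₁.length := by
      rw [hsplit, List.append_assoc, List.take_left]
    rw [h1, hrec, hq2,
      List.take_append_of_le_length (by rw [length_subW]; omega), take_subW]
  have hμ₁len' : ((E (k + 1) i).take q).length = q := by
    rw [List.length_take]; omega
  have hcore : subW ((E (k + 1) i).drop q) ++ [false] = w ++ μ₂ := by
    have h2 : subW (E (k + 1) i) ++ [false] = μ₁ ++ (w ++ μ₂) := by
      rw [← hrec, hsplit, List.append_assoc]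
    rw [hE'split, subW_append, List.append_assoc] at h2
    rw [← hμ₁eq] at h2
    exact List.append_cancel_left h2
  have hn2 : 2 ≤ w.length := by omega
  have hlρ : w.length + μ₂.length = 2 * ((E (k + 1) i).drop q).length + 1 := by
    have := congrArg List.length hcore
    simp only [List.length_append, List.length_singleton, length_subW] at this
    omega
  set v := ((E (k + 1) i).drop q).take (w.length / 2) with hv
  have hvlen : v.length = w.length / 2 := by
    rw [hv, List.length_take]; omega
  have hwtake : w.take (2 * (w.length / 2)) = subW v := by
    have h1 : w.take (2 * (w.length / 2)) = (w ++ μ₂).take (2 * (w.length / 2)) :=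
      (List.take_append_of_le_length (by omega)).symm
    rw [h1, ← hcore,
      List.take_append_of_le_length (by rw [length_subW]; omega), take_subW]
  have hwlet : ∀ t < v.length, w.getD (2 * t + 1) false = !(v.getD t false) := by
    intro t ht
    have ht' : 2 * t + 1 < 2 * (w.length / 2) := by omega
    rw [← getD_take' w ht', hwtake, subW_getD_odd _ _ ht]
  have hwfull : w = subW v ∨ w = subW v ++ [false] := by
    rcases Nat.even_or_odd w.length with he | ho
    · left
      rw [← hwtake, show 2 * (w.length / 2) = w.length from by
        obtain ⟨r, hr⟩ := he; omega, List.take_length]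
    · right
      have hlast : w.getD (2 * (w.length / 2)) false = false := by
        have hg : (w ++ μ₂).getD (2 * (w.length / 2)) false = false := by
          rw [← hcore]; exact good_subW_concat _ _
        obtain ⟨r, hr⟩ := ho
        rwa [List.getD_append _ _ _ _ (by omega)] at hg
      obtain ⟨r, hr⟩ := ho
      have hw1 : w = w.take (w.length - 1) ++ [w.getD (w.length - 1) false] := by
        conv_lhs => rw [← List.take_append_drop (w.length - 1) w]
        congr 1
        rw [List.drop_eq_getElem_cons (by omega), List.getD_eq_getElem _ _ (by omega)]
        rw [show w.length - 1 + 1 = w.length from by omega, List.drop_length]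
      rw [show w.length - 1 = 2 * (w.length / 2) from by omega] at hw1
      rw [hw1, hwtake, hlast]
  have hvne : v ≠ [] := by
    intro hnil
    rw [hnil] at hvlen
    simp at hvlen
    omega
  have hwocc_dec : ∀ s, occ w (2 * s) → occ v s := by
    intro s hs
    exact occ_decode (by omega) hwlet hs
  have hweven : ∀ j, occ w j → j % 2 = 0 := by
    intro j hj
    have h1 := hj k₀ hk₀lt
    rw [hk₀] at h1
    have := D_true_odd h1
    omega
  have hvfac : ∃ s, occ v s := by
    obtain ⟨j, hj⟩ := hfac
    have hje := hweven j hj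
    exact ⟨j / 2, hwocc_dec _ (by rwa [show 2 * (j / 2) = j from by omega])⟩
  have hvinf : v <:+: E (k + 1) i := by
    refine ⟨(E (k + 1) i).take q, ((E (k + 1) i).drop q).drop (w.length / 2), ?_⟩
    rw [List.append_assoc, hv, List.take_append_drop, ← hE'split]
  have hwinfix_lift : ∀ m' i', 1 ≤ m' → v <:+: E m' i' → w <:+: E (m' + 1) i' := by
    intro m' i' hm' hv'
    have h1 : (subW v ++ [false]) <:+: (subW (E m' i') ++ [false]) := infix_subW_concat hv'
    rw [← E_succ m' i' hm'] at h1
    rcases hwfull with h | h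
    · rw [h]
      exact (List.prefix_append _ _).isInfix.trans h1
    · rw [← h] at h1
      exact h1
  have hvenv : IsEnv v (k + 1) i := by
    refine ⟨by omega, hi, hvinf, ?_⟩
    intro m' i' hm' hi' hlt hvin
    refine hmin (m' + 1) i' (by omega) hi' ?_ (hwinfix_lift m' i' hm' hvin)
    rcases hlt with h | ⟨h1, h2⟩
    · exact Or.inl (by omega)
    · exact Or.inr ⟨by omega, h2⟩
  have hE'eq : E (k + 1) i = (E (k + 1) i).take q ++ v ++ ((E (k + 1) i).drop q).drop (w.length / 2) := by
    rw [List.append_assoc, hv, List.take_append_drop, ← hE'split]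
  have IHv := IH i v ((E (k + 1) i).take q) (((E (k + 1) i).drop q).drop (w.length / 2))
    hvne hvfac hvenv hE'eq
  intro j hj
  have hje := hweven j hj
  obtain ⟨s, rfl⟩ : ∃ s, j = 2 * s := ⟨j / 2, by omega⟩
  obtain ⟨hs1, hs2⟩ := IHv s (hwocc_dec s hj)
  rw [hμ₁len'] at hs1 hs2
  constructor
  · omega
  · rw [hrec, hq2, show 2 * s - 2 * q = 2 * (s - q) from by omega]
    refine occ_concat (occ_subW hs2) ?_
    rw [length_subW,
      show 2 * (s - q) + 2 * (E (k + 1) i).length = 2 * ((s - q) + (E (k + 1) i).length) by ring,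
      D_even]

end PD

namespace PD

lemma occ_cons_a {w : List Bool} {j : ℕ} (hjo : j % 2 = 1) (hj : occ w j) :
    occ (false :: w) (j - 1) := by
  intro k hk
  cases k with
  | zero =>
    obtain ⟨s, rfl⟩ : ∃ s, j = 2 * s + 1 := ⟨j / 2, by omega⟩
    rw [Nat.add_zero, show 2 * s + 1 - 1 = 2 * s from by omega, D_even]; rfl
  | succ k =>
    rw [List.getD_cons_succ, show j - 1 + (k + 1) = j + k from by omega]
    exact hj k (by simpa using hk)

lemma Pp_one : Pp 1 := by
  intro i w μ₁ μ₂ hw hfac henv hsplit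
  have hwpos : 0 < w.length := List.length_pos_iff.mpr hw
  rcases henv.2.1 with rfl | rfl
  · have hlen : μ₁.length + w.length + μ₂.length = 1 := by
      have := congrArg List.length hsplit
      rw [E_one_one] at this
      simp only [List.length_append, List.length_singleton] at this
      omega
    have hμ1 : μ₁ = [] := List.length_eq_zero_iff.mp (by omega)
    have hμ2 : μ₂ = [] := List.length_eq_zero_iff.mp (by omega)
    rw [hμ1, hμ2] at hsplit
    simp only [List.append_nil, List.nil_append] at hsplit
    intro j hj
    refine ⟨by simp [hμ1], ?_⟩
    rw [hμ1]
    simpa [hsplit] using hj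
  · have hlen : μ₁.length + w.length + μ₂.length = 2 := by
      have := congrArg List.length hsplit
      rw [E_one_two] at this
      simp only [List.length_append, List.length_cons, List.length_nil] at this
      omega
    rcases (by omega : w.length = 2 ∨ w.length = 1) with h2 | h1
    · have hμ1 : μ₁ = [] := List.length_eq_zero_iff.mp (by omega)
      have hμ2 : μ₂ = [] := List.length_eq_zero_iff.mp (by omega)
      rw [hμ1, hμ2] at hsplit
      simp only [List.append_nil, List.nil_append] at hsplit
      intro j hj
      refine ⟨by simp [hμ1], ?_⟩
      rw [hμ1]
      simpa [hsplit] using hj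
    · exfalso
      obtain ⟨c, rfl⟩ := List.length_eq_one_iff.mp h1
      have hc : c = false := by
        have h0 : (E 1 2).getD (μ₁.length + 0) false = c := by
          rw [hsplit, getD_split (by omega)]; rfl
        rw [E_one_two] at h0
        rcases (by omega : μ₁.length = 0 ∨ μ₁.length = 1) with h | h <;>
          rw [h] at h0 <;> exact h0.symm
      subst hc
      exact henv.2.2.2 1 1 le_rfl (Or.inl rfl) (Or.inr ⟨rfl, one_lt_two⟩)
        (by rw [E_one_one])

lemma Pp_succ (k : ℕ) (IH : Pp (k + 1)) : Pp (k + 2) := by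
  intro i w μ₁ μ₂ hw hfac henv hsplit
  have hwpos : 0 < w.length := List.length_pos_iff.mpr hw
  by_cases hbf : ∃ t, t < w.length ∧ w.getD t false = true
  · -- w contains a b
    obtain ⟨k₀, hk₀lt, hk₀⟩ := hbf
    have hgood : Good (E (k + 2) i) := good_E _ _ (by omega)
    have hEk₀ : (E (k + 2) i).getD (μ₁.length + k₀) false = true := by
      rw [hsplit, getD_split hk₀lt]; exact hk₀
    have hsum : (μ₁.length + k₀) % 2 = 1 := good_true_odd hgood hEk₀
    rcases Nat.even_or_odd μ₁.length with ⟨r, hr⟩ | ⟨r, hr⟩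
    · exact caseA k IH i w μ₁ μ₂ hfac henv hsplit (by omega) ⟨k₀, hk₀lt, hk₀⟩
    · -- μ₁ has odd length
      have hμ₁ne : μ₁ ≠ [] := by
        intro h; rw [h] at hr; simp only [List.length_nil] at hr; omega
      have hlast : μ₁.getLast hμ₁ne = false := by
        rw [List.getLast_eq_getElem, ← List.getD_eq_getElem μ₁ false (by omega)]
        rw [← List.getD_append μ₁ (w ++ μ₂) false _ (by omega), ← List.append_assoc,
          ← hsplit]
        have := hgood r
        rw [show 2 * r = μ₁.length - 1 from by omega] at this
        exact this
      have hμ₁dec : μ₁ = μ₁.dropLast ++ [false] := by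
        conv_lhs => rw [← List.dropLast_append_getLast hμ₁ne]
        rw [hlast]
      have hsplit' : E (k + 2) i = μ₁.dropLast ++ (false :: w) ++ μ₂ := by
        rw [hsplit]
        conv_lhs => rw [hμ₁dec]
        simp [List.append_assoc]
      have henv' : IsEnv (false :: w) (k + 2) i := by
        refine ⟨henv.1, henv.2.1, ⟨μ₁.dropLast, μ₂, hsplit'.symm⟩, ?_⟩
        intro m' i' h1 h2 hlt hin
        exact henv.2.2.2 m' i' h1 h2 hlt
          (((List.suffix_cons false w).isInfix).trans hin)
      have hk₀e : k₀ % 2 = 0 := by omega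
      have hwodd : ∀ j, occ w j → j % 2 = 1 := by
        intro j hj
        have h1 := hj k₀ hk₀lt
        rw [hk₀] at h1
        have := D_true_odd h1
        omega
      have hfac' : ∃ j, occ (false :: w) j := by
        obtain ⟨j, hj⟩ := hfac
        exact ⟨j - 1, occ_cons_a (hwodd j hj) hj⟩
      have hdll : μ₁.dropLast.length = μ₁.length - 1 := by
        rw [List.length_dropLast]
      have hA := caseA k IH i (false :: w) μ₁.dropLast μ₂ hfac' henv' hsplit'
        (by omega) ⟨k₀ + 1, by simp; omega, by simpa using hk₀⟩
      intro j hj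
      have hjo := hwodd j hj
      obtain ⟨h1, h2⟩ := hA (j - 1) (occ_cons_a hjo hj)
      rw [hdll] at h1 h2
      refine ⟨by omega, ?_⟩
      rw [show j - μ₁.length = j - 1 - (μ₁.length - 1) from by omega]
      exact h2
  · -- w is b-free
    push_neg at hbf
    have hall : ∀ t, t < w.length → w.getD t false = false := by
      intro t ht
      cases h : w.getD t false
      · rfl
      · exact absurd h (hbf t ht)
    have hwrep : w = List.replicate w.length false := by
      apply List.ext_getElem (by simp)
      intro t h1 h2
      rw [List.getElem_replicate, ← List.getD_eq_getElem _ false h1]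
      exact hall t h1
    have hlen3 : w.length ≤ 3 := by
      by_contra hgt
      push_neg at hgt
      obtain ⟨j, hj⟩ := hfac
      apply no_aaaa j
      refine occ_prefix ⟨List.replicate (w.length - 4) false, ?_⟩ hj
      rw [show ([false, false, false, false] : List Bool) = List.replicate 4 false from rfl,
        ← List.replicate_add, show 4 + (w.length - 4) = w.length from by omega]
      exact hwrep.symm
    rcases (by omega : w.length = 1 ∨ w.length = 2 ∨ w.length = 3) with h1 | h1 | h1
    · rw [h1] at hwrep
      exact absurd (show w <:+: E 1 1 by rw [hwrep, E_one_one]; decide)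
        (henv.2.2.2 1 1 le_rfl (Or.inl rfl) (Or.inl (by omega)))
    · rw [h1] at hwrep
      exact absurd (show w <:+: E 1 2 by rw [hwrep, E_one_two]; decide)
        (henv.2.2.2 1 2 le_rfl (Or.inr rfl) (Or.inl (by omega)))
    · rw [h1] at hwrep
      have hwc : w = [false, false, false] := hwrep
      have h31 : w <:+: E 3 1 := by rw [hwc, E_three_one]; decide
      have hnlt : ¬ EnvLt 3 1 (k + 2) i :=
        fun hlt => henv.2.2.2 3 1 (by norm_num) (Or.inl rfl) hlt h31
      have hk1 : k = 0 ∨ (k = 1 ∧ i = 1) := by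
        by_cases hk0 : k = 0
        · exact Or.inl hk0
        · by_cases hk1' : k = 1
          · subst hk1'
            rcases henv.2.1 with rfl | rfl
            · exact Or.inr ⟨rfl, rfl⟩
            · exact absurd (Or.inr ⟨by omega, by omega⟩) hnlt
          · exact absurd (Or.inl (by omega)) hnlt
      rcases hk1 with rfl | ⟨rfl, rfl⟩
      · exfalso
        have hin := henv.2.2.1
        rcases henv.2.1 with rfl | rfl
        · rw [E_two_one, hwc] at hin
          exact absurd hin (by decide)
        · rw [E_two_two, hwc] at hin
          exact absurd hin (by decide)
      · -- m = 3, i = 1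
        have hsl : μ₁.length + 3 + μ₂.length = 7 := by
          have := congrArg List.length hsplit
          rw [E_three_one] at this
          simp only [List.length_append, List.length_cons, List.length_nil] at this
          omega
        have hc : ∀ kk, kk < 3 → (E 3 1).getD (μ₁.length + kk) false = false := by
          intro kk hkk
          rw [show (3:ℕ) = 1 + 2 from rfl] at *
          rw [hsplit, getD_split (by omega : kk < w.length)]
          exact hall kk (by omega)
        have h0 := hc 0 (by norm_num)
        have h1' := hc 1 (by norm_num)
        have h2' := hc 2 (by norm_num)
        rw [E_three_one] at h0 h1' h2'
        have hμl : μ₁.length = 2 := by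
          rcases (by omega : μ₁.length = 0 ∨ μ₁.length = 1 ∨ μ₁.length = 2 ∨
              μ₁.length = 3 ∨ μ₁.length = 4) with h | h | h | h | h <;>
            rw [h] at h0 h1' h2'
          · exact absurd h1' (by decide)
          · exact absurd h0 (by decide)
          · exact h
          · exact absurd h2' (by decide)
          · exact absurd h1' (by decide)
        intro j hj
        rw [hμl]
        rw [hwc] at hj
        exact occ_aaa hj

lemma Pp_all (m : ℕ) : Pp m := by
  induction m with
  | zero =>
    intro i w μ₁ μ₂ hw hfac henv hsplit
    exact absurd henv.1 (by omega)
  | succ m ih =>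
    cases m with
    | zero => exact Pp_one
    | succ m' => exact Pp_succ m' (by exact ih)

end PD

namespace PD

lemma occursD_iff (w : List Bool) (j : ℕ) : OccursD w j ↔ 1 ≤ j ∧ occ w (j - 1) :=
  Iff.rfl

lemma infinite_of_unbounded {P : ℕ → Prop} (h : ∀ N, ∃ e, N ≤ e ∧ P e) :
    (setOf P).Infinite := by
  apply Set.infinite_of_not_bddAbove
  rintro ⟨b, hb⟩
  obtain ⟨e, he, hPe⟩ := h (b + 1)
  exact absurd (hb hPe) (by omega)

lemma nth_shift {P Q : ℕ → Prop} (c : ℕ) (hP : (setOf P).Infinite)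
    (hQ : setOf Q = (fun e => e + c) '' setOf P) :
    ∀ n, Nat.nth Q n = Nat.nth P n + c := by
  have hQinf : (setOf Q).Infinite := by
    rw [hQ]
    exact Set.Infinite.image (fun a _ b _ h => by omega) hP
  have hf : StrictMono (Nat.nth Q) := Nat.nth_strictMono hQinf
  have hg : StrictMono (fun n => Nat.nth P n + c) := fun a b h => by
    have := Nat.nth_strictMono hP h
    simp only
    omega
  have hr : Set.range (Nat.nth Q) = Set.range (fun n => Nat.nth P n + c) := by
    rw [Nat.range_nth_of_infinite hQinf, (show Set.ofPred Q = (fun e => e + c) '' Set.ofPred P from hQ), ← Nat.range_nth_of_infinite hP,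
      ← Set.range_comp]
    rfl
  exact congrFun ((StrictMono.range_inj hf hg).mp hr)

/-- The main occurrence correspondence, 1-indexed. -/
lemma key_corr (w : List Bool) (hw : w ≠ []) (hfac : FactorD w)
    (m i : ℕ) (henv : IsEnv w m i)
    (μ₁ μ₂ : List Bool) (hsplit : E m i = μ₁ ++ w ++ μ₂) :
    ∀ j, OccursD w j ↔ ∃ e, OccursD (E m i) e ∧ j = e + μ₁.length := by
  have hfac' : ∃ j, occ w j := by
    obtain ⟨j, hj1, hj2⟩ := hfac
    exact ⟨j - 1, hj2⟩
  have hmain := Pp_all m i w μ₁ μ₂ hw hfac' henv hsplit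
  intro j
  constructor
  · rintro ⟨hj1, hj2⟩
    obtain ⟨h1, h2⟩ := hmain (j - 1) hj2
    refine ⟨j - μ₁.length, ⟨by omega, ?_⟩, by omega⟩
    rw [show j - μ₁.length - 1 = j - 1 - μ₁.length from by omega]
    exact h2
  · rintro ⟨e, ⟨he1, he2⟩, rfl⟩
    refine ⟨by omega, ?_⟩
    have := occ_infix (x := μ₁) (y := w) (z := μ₂) (by rw [← hsplit]; exact he2)
    rw [show e + μ₁.length - 1 = e - 1 + μ₁.length from by omega]
    exact this

lemma occD_E_infinite (m i : ℕ) (hm : 1 ≤ m) :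
    {e | OccursD (E m i) e}.Infinite := by
  apply infinite_of_unbounded
  intro N
  obtain ⟨e, he, hocc⟩ := occ_E_exists m i hm N
  exact ⟨e + 1, by omega, ⟨by omega, by rw [Nat.add_sub_cancel]; exact hocc⟩⟩

end PD


open PD
/-- Uniqueness of envelope extension, strong version: if `w` is a nonempty factor
of the doubling sequence with `Env(w) = E m i` and `E m i = μ₁ · w · μ₂`, then for
every `p ≥ 1` the `p`-th occurrence of `w` lies inside the `p`-th occurrence of
`E m i`: `L(w,p) = L(E m i, p) + |μ₁|`; equivalently, the set of starting
positions of occurrences of `w` is exactly `{L(E m i, p) + |μ₁| : p ≥ 1}`. -/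
theorem doubling_envelope_unique_strong (w : List Bool) (hw : w ≠ []) (hfac : FactorD w)
    (m i : ℕ) (henv : IsEnv w m i)
    (μ₁ μ₂ : List Bool) (hsplit : E m i = μ₁ ++ w ++ μ₂) :
    (∀ p, 1 ≤ p → L w p = L (E m i) p + μ₁.length) ∧
      {j : ℕ | OccursD w j} = {j : ℕ | ∃ p, 1 ≤ p ∧ j = L (E m i) p + μ₁.length} := by
  have hkey := key_corr w hw hfac m i henv μ₁ μ₂ hsplit
  have hm : 1 ≤ m := henv.1
  have hEinf : {e | OccursD (E m i) e}.Infinite := occD_E_infinite m i hm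
  have hset : {j | OccursD w j} = (fun e => e + μ₁.length) '' {e | OccursD (E m i) e} := by
    ext j
    simp only [Set.mem_setOf_eq, Set.mem_image]
    rw [hkey j]
    constructor
    · rintro ⟨e, he, rfl⟩; exact ⟨e, he, rfl⟩
    · rintro ⟨e, he, rfl⟩; exact ⟨e, he, rfl⟩
  have hnth := nth_shift μ₁.length hEinf hset
  constructor
  · intro p hp
    exact hnth (p - 1)
  · rw [hset]
    ext j
    simp only [Set.mem_image, Set.mem_setOf_eq]
    constructor
    · rintro ⟨e, he, rfl⟩
      have hr : e ∈ Set.range (Nat.nth (OccursD (E m i))) := by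
        rw [Nat.range_nth_of_infinite hEinf]; exact he
      obtain ⟨n, hn⟩ := hr
      exact ⟨n + 1, by omega, by simp [L, hn]⟩
    · rintro ⟨p, hp, rfl⟩
      refine ⟨L (E m i) p, ?_, rfl⟩
      exact Nat.nth_mem_of_infinite hEinf _
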